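/- Let j: Mᵐ → P^{n−1} be a minimal isometric immersion and i: P^{n−1} → Nⁿ a non-minimal umbilical hypersurface with constant mean curvature. Then the composition i∘j: M → N is a pseudo-umbilical isometric immersion with constant mean curvature. -/
import Mathlib


open scoped RealInnerProductSpace
noncomputable section

/-- A fixed orthonormal frame of the (model) tangent space of the `m`-dimensional
Riemannian manifold `M`. -/
def onb (m : ℕ) : OrthonormalBasis (Fin m) ℝ (EuclideanSpace ℝ (Fin m)) :=
  EuclideanSpace.basisFun (Fin m) ℝ

/-- The biharmonic stress-energy tensor
`S₂(X,Y) = ½|τ(φ)|² ⟨X,Y⟩ + ⟨dφ,∇τ(φ)⟩ ⟨X,Y⟩ − ⟨dφ(X),∇_Y τ(φ)⟩ − ⟨dφ(Y),∇_X τ(φ)⟩`,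
expressed pointwise in terms of the differential `dphi` of `φ`, the tension field `tau`
and its covariant derivative `Dtau` (the trace `⟨dφ,∇τ(φ)⟩` being computed in an
orthonormal frame). -/
def S2 {m : ℕ} {F : Type*} [NormedAddCommGroup F] [InnerProductSpace ℝ F]
    (dphi : EuclideanSpace ℝ (Fin m) →ₗ[ℝ] F) (tau : F)
    (Dtau : EuclideanSpace ℝ (Fin m) →ₗ[ℝ] F)
    (X Y : EuclideanSpace ℝ (Fin m)) : ℝ :=
  (1 / 2 : ℝ) * ‖tau‖ ^ 2 * ⟪X, Y⟫
    + (∑ i, ⟪dphi (onb m i), Dtau (onb m i)⟫) * ⟪X, Y⟫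
    - ⟪dphi X, Dtau Y⟫ - ⟪dphi Y, Dtau X⟫

/-- Let `j : Mᵐ → P^{n−1}` be a minimal isometric immersion and
`i : P^{n−1} → Nⁿ` a non-minimal umbilical hypersurface with constant mean curvature
(`B_i(u,v) = ⟨u,v⟩ H_i`, `‖H_i‖ = c ≠ 0`). Then `i∘j : M → N` is a pseudo-umbilical
isometric immersion with constant mean curvature. The second fundamental form of the
composition is `B_{i∘j}(X,Y) = di(B_j(X,Y)) + B_i(dj X, dj Y)` and its tension field is
`τ(i∘j) = Σᵢ B_{i∘j}(Xᵢ,Xᵢ)`. -/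
theorem composition_pseudo_umbilical
    (m : ℕ)
    (M : Type*) (E' : Type*) (F : Type*)
    [NormedAddCommGroup E'] [InnerProductSpace ℝ E']
    [NormedAddCommGroup F] [InnerProductSpace ℝ F]
    (dj : M → EuclideanSpace ℝ (Fin m) →ₗ[ℝ] E')
    (Bj : M → EuclideanSpace ℝ (Fin m) →ₗ[ℝ] EuclideanSpace ℝ (Fin m) →ₗ[ℝ] E')
    (di : M → E' →ₗ[ℝ] F)
    (Bi : M → E' →ₗ[ℝ] E' →ₗ[ℝ] F)
    (Hi : M → F)
    (c : ℝ) (hc : c ≠ 0)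
    (hjiso : ∀ p X Y, ⟪dj p X, dj p Y⟫ = ⟪X, Y⟫)
    (hjminimal : ∀ p, ∑ i, Bj p (onb m i) (onb m i) = 0)
    (hiiso : ∀ p (u v : E'), ⟪di p u, di p v⟫ = ⟪u, v⟫)
    (humbilical : ∀ p (u v : E'), Bi p u v = ⟪u, v⟫ • Hi p)
    (hHnormal : ∀ p (u : E'), ⟪Hi p, di p u⟫ = 0)
    (hH : ∀ p, ‖Hi p‖ = c) :
    -- `i∘j` is an isometric immersion:
    (∀ p X Y, ⟪di p (dj p X), di p (dj p Y)⟫ = ⟪X, Y⟫) ∧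
    -- `i∘j` is pseudo-umbilical:
    (∀ p X Y,
      ⟪di p (Bj p X Y) + Bi p (dj p X) (dj p Y),
        ∑ i, (di p (Bj p (onb m i) (onb m i))
          + Bi p (dj p (onb m i)) (dj p (onb m i)))⟫ =
      (1 / (m : ℝ)) *
        ‖∑ i, (di p (Bj p (onb m i) (onb m i))
          + Bi p (dj p (onb m i)) (dj p (onb m i)))‖ ^ 2 * ⟪X, Y⟫) ∧
    -- `i∘j` has constant mean curvature:
    (∀ p q,
      ‖∑ i, (di p (Bj p (onb m i) (onb m i))
          + Bi p (dj p (onb m i)) (dj p (onb m i)))‖ =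
      ‖∑ i, (di q (Bj q (onb m i) (onb m i))
          + Bi q (dj q (onb m i)) (dj q (onb m i)))‖) := by
  have key : ∀ p, (∑ i, (di p (Bj p (onb m i) (onb m i))
      + Bi p (dj p (onb m i)) (dj p (onb m i)))) = (m : ℝ) • Hi p := by
    intro p
    rw [Finset.sum_add_distrib]
    have h1 : (∑ i, di p (Bj p (onb m i) (onb m i))) = 0 := by
      rw [← map_sum, hjminimal p, map_zero]
    have h2 : ∀ i : Fin m, Bi p (dj p (onb m i)) (dj p (onb m i)) = Hi p := by
      intro i
      rw [humbilical, hjiso]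
      have := (onb m).orthonormal.1 i
      rw [real_inner_self_eq_norm_sq, this]
      simp
    rw [h1, zero_add]
    simp [h2, Finset.sum_const, Finset.card_univ, Nat.cast_smul_eq_nsmul]
  have hXY : ∀ p X Y, ⟪di p (dj p X), di p (dj p Y)⟫ = ⟪X, Y⟫ := by
    intro p X Y; rw [hiiso, hjiso]
  refine ⟨hXY, ?_, ?_⟩
  · intro p X Y
    rw [key p]
    rcases Nat.eq_zero_or_pos m with hm | hm
    · subst hm; simp
    have hmne : (m : ℝ) ≠ 0 := Nat.cast_ne_zero.mpr hm.ne'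
    rw [inner_add_left, inner_smul_right, inner_smul_right]
    have hz : ⟪di p (Bj p X Y), Hi p⟫ = 0 := by
      rw [real_inner_comm, hHnormal]
    rw [hz, humbilical, hjiso, real_inner_smul_left,
      real_inner_self_eq_norm_sq, hH p, norm_smul]
    simp only [Real.norm_natCast]
    field_simp
    rw [hH p]; ring
  · intro p q
    rw [key p, key q, norm_smul, norm_smul, hH p, hH q]

end
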